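/- arXiv:2603.07948 — 6 statements merged into one kernel-verified Lean document; each statement's English description precedes it below -/
import Mathlib

section
/- For every list L of lines, every pair of integer bounds l ≤ r, and every integer x with l ≤ x ≤ r: query (insertAll L l r) x l r equals the minimum over f ∈ L of (eval f x : WithTop ℤ), where the minimum over the empty list is ⊤. In particular, the Li-Chao tree query returns exactly the value of the lower envelope of all inserted lines at x. -/
/-- A line `y = k*x + b`, represented as the pair `(k, b)` of integers. -/
abbrev Line : Type := ℤ × ℤ

/-- Evaluation of a line at an integer point. -/
def Line.eval (f : Line) (x : ℤ) : ℤ := f.1 * x + f.2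

/-- A Li-Chao tree: either empty, or a node storing a line with two subtrees. -/
inductive LiChao : Type where
  | nil : LiChao
  | node : Line → LiChao → LiChao → LiChao

/-- Insert a line `f` into the tree over integer bounds `[l, r]`. -/
def LiChao.insert : LiChao → Line → ℤ → ℤ → LiChao
  | .nil, f, _, _ => .node f .nil .nil
  | .node s a b, f, l, r =>
    let m := (l + r) / 2
    let win : Line := if f.eval m < s.eval m then f else s
    let lose : Line := if f.eval m < s.eval m then s else f
    if l = r then .node win a b
    else if lose.eval l < win.eval l then
      .node win (LiChao.insert a lose l m) b
    else
      .node win a (LiChao.insert b lose (m + 1) r)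

/-- Query the minimum value at `x` over bounds `[l, r]`; `⊤` for the empty tree. -/
def LiChao.query : LiChao → ℤ → ℤ → ℤ → WithTop ℤ
  | .nil, _, _, _ => ⊤
  | .node s a b, x, l, r =>
    let m := (l + r) / 2
    if x ≤ m then min (s.eval x : WithTop ℤ) (LiChao.query a x l m)
    else min (s.eval x : WithTop ℤ) (LiChao.query b x (m + 1) r)

/-- Fold insertion over a list of lines, starting from the empty tree. -/
def LiChao.insertAll (L : List Line) (l r : ℤ) : LiChao :=
  L.foldl (fun t f => t.insert f l r) .nil

/-- Number of `node` constructors in the tree. -/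
def LiChao.size : LiChao → ℕ
  | .nil => 0
  | .node _ a b => 1 + a.size + b.size

/-- Height of the tree. -/
def LiChao.height : LiChao → ℕ
  | .nil => 0
  | .node _ a b => 1 + max a.height b.height


lemma env1 (p q : Line) {l m x : ℤ} (hl : p.eval l ≤ q.eval l)
    (hm : p.eval m ≤ q.eval m) (h1 : l ≤ x) (h2 : x ≤ m) :
    p.eval x ≤ q.eval x := by
  simp only [Line.eval] at *
  rcases le_total p.1 q.1 with h | h
  · nlinarith
  · nlinarith

lemma env2 (p q : Line) {l m x : ℤ} (hl : q.eval l < p.eval l)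
    (hm : p.eval m ≤ q.eval m) (hlm : l ≤ m) (hx : m ≤ x) :
    p.eval x ≤ q.eval x := by
  simp only [Line.eval] at *
  have hk : p.1 < q.1 := by nlinarith
  nlinarith

lemma query_insert (t : LiChao) : ∀ (f : Line) (l r x : ℤ), l ≤ r → l ≤ x → x ≤ r →
    (t.insert f l r).query x l r = min (f.eval x : WithTop ℤ) (t.query x l r) := by
  induction t with
  | nil =>
    intro f l r x hlr hlx hxr
    simp only [LiChao.insert, LiChao.query]
    split <;> simp
  | node s a b iha ihb =>
    intro f l r x hlr hlx hxr
    set m := (l + r) / 2 with hm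
    have hlm : l ≤ m := by omega
    have hmr : m ≤ r := by omega
    set win : Line := if f.eval m < s.eval m then f else s with hwin
    set lose : Line := if f.eval m < s.eval m then s else f with hlose
    have hwm : win.eval m ≤ lose.eval m := by
      rw [hwin, hlose]; split <;> omega
    have hminpt : ∀ y : ℤ, min (win.eval y) (lose.eval y) = min (f.eval y) (s.eval y) := by
      intro y; rw [hwin, hlose]; split <;> simp [min_comm]
    rw [LiChao.insert]
    simp only [← hm, ← hwin, ← hlose]
    by_cases hlr' : l = r
    · subst hlr'
      have hml : m = l := by omega
      have hxl : x = l := le_antisymm hxr hlx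
      simp only [if_pos rfl, if_true, LiChao.query, ← hm]
      rw [if_pos (by omega), if_pos (by omega)]
      have : (win.eval x : WithTop ℤ) = min ((f.eval x : WithTop ℤ)) ((s.eval x : WithTop ℤ)) := by
        rw [← WithTop.coe_min, ← hminpt x]
        have : win.eval x ≤ lose.eval x := by rw [hxl, ← hml]; exact hwm
        simp [min_eq_left this]
      rw [this, min_assoc]
    · rw [if_neg hlr']
      have hmr' : m < r := by omega
      by_cases hcase : lose.eval l < win.eval l
      · rw [if_pos hcase]
        rw [LiChao.query]
        simp only [← hm]
        by_cases hx : x ≤ m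
        · rw [if_pos hx, iha lose l m x hlm hlx hx]
          rw [LiChao.query]
          simp only [← hm, if_pos hx]
          rw [← min_assoc, ← WithTop.coe_min, hminpt x, WithTop.coe_min, min_assoc]
        · rw [if_neg hx]
          rw [LiChao.query]
          simp only [← hm, if_neg hx]
          have hwx : win.eval x ≤ lose.eval x := env2 win lose hcase hwm hlm (by omega)
          have : (win.eval x : WithTop ℤ) = min ((f.eval x : WithTop ℤ)) ((s.eval x : WithTop ℤ)) := by
            rw [← WithTop.coe_min, ← hminpt x, min_eq_left hwx]
          rw [this, min_assoc]
      · rw [if_neg hcase]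
        push_neg at hcase
        rw [LiChao.query]
        simp only [← hm]
        by_cases hx : x ≤ m
        · rw [if_pos hx]
          rw [LiChao.query]
          simp only [← hm, if_pos hx]
          have hwx : win.eval x ≤ lose.eval x := env1 win lose hcase hwm hlx hx
          have : (win.eval x : WithTop ℤ) = min ((f.eval x : WithTop ℤ)) ((s.eval x : WithTop ℤ)) := by
            rw [← WithTop.coe_min, ← hminpt x, min_eq_left hwx]
          rw [this, min_assoc]
        · rw [if_neg hx, ihb lose (m+1) r x (by omega) (by omega) hxr]
          rw [LiChao.query]
          simp only [← hm, if_neg hx]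
          rw [← min_assoc, ← WithTop.coe_min, hminpt x, WithTop.coe_min, min_assoc]

lemma foldr_min_min (c : WithTop ℤ) (q : WithTop ℤ) (L : List (WithTop ℤ)) :
    L.foldr min (min c q) = min c (L.foldr min q) := by
  induction L with
  | nil => rfl
  | cons a L ih =>
    simp only [List.foldr_cons, ih]
    rw [min_left_comm]

lemma query_foldl (L : List Line) : ∀ (t : LiChao) (l r x : ℤ), l ≤ r → l ≤ x → x ≤ r →
    (L.foldl (fun t f => t.insert f l r) t).query x l r =
      (L.map (fun f => (f.eval x : WithTop ℤ))).foldr min (t.query x l r) := by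
  induction L with
  | nil => intro t l r x _ _ _; rfl
  | cons f L ih =>
    intro t l r x hlr hlx hxr
    simp only [List.foldl_cons, List.map_cons, List.foldr_cons]
    rw [ih (t.insert f l r) l r x hlr hlx hxr,
      query_insert t f l r x hlr hlx hxr, foldr_min_min]

/-- Theorem 3 (Query Correctness): the query returns exactly the lower
envelope of all inserted lines at `x` (the minimum over the empty list is `⊤`). -/
theorem lichao_query_correct (L : List Line) (l r : ℤ) (hlr : l ≤ r)
    (x : ℤ) (hlx : l ≤ x) (hxr : x ≤ r) :
    (LiChao.insertAll L l r).query x l r =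
      (L.map (fun f => (f.eval x : WithTop ℤ))).foldr min ⊤ := by
  have h := query_foldl L LiChao.nil l r x hlr hlx hxr
  simpa [LiChao.insertAll, LiChao.query] using h
end

section
/- For every list L of lines, every pair of integer bounds l ≤ r, every integer x with l ≤ x ≤ r, and every line f ∈ L: query (insertAll L l r) x l r ≤ (eval f x : WithTop ℤ). -/
section Aux

private lemma lin_between {k c l m x : ℤ} (hl : 0 ≤ k*l + c) (hm : 0 ≤ k*m + c)
    (h1 : l ≤ x) (h2 : x ≤ m) : 0 ≤ k*x + c := by
  rcases le_total 0 k with h | h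
  · nlinarith
  · nlinarith

private lemma lin_extend {k c l m x : ℤ} (hlm : l ≤ m) (hl : k*l + c < 0)
    (hm : 0 ≤ k*m + c) (hmx : m ≤ x) : 0 ≤ k*x + c := by
  have hne : l < m := lt_of_le_of_ne hlm (by rintro rfl; omega)
  have hk : 0 < k := by nlinarith
  nlinarith

private lemma mid_lb {l r : ℤ} (h : l ≤ r) : l ≤ (l + r) / 2 := by omega
private lemma mid_ub {l r : ℤ} (h : l < r) : (l + r) / 2 < r := by omega
private lemma mid_eq {l : ℤ} : (l + l) / 2 = l := by omega

private lemma LiChao.insert_spec : ∀ (t : LiChao) (f : Line) (l r x : ℤ),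
    l ≤ x → x ≤ r →
    (t.insert f l r).query x l r ≤ (f.eval x : WithTop ℤ) ∧
    (t.insert f l r).query x l r ≤ t.query x l r := by
  intro t
  induction t with
  | nil =>
    intro f l r x hlx hxr
    simp only [LiChao.insert, LiChao.query]
    constructor
    · split <;> simp
    · split <;> simp
  | node s a b iha ihb =>
    intro f l r x hlx hxr
    have hlr : l ≤ r := hlx.trans hxr
    set m := (l + r) / 2 with hm
    have hlm : l ≤ m := mid_lb hlr
    simp only [LiChao.insert, ← hm]
    by_cases heq : l = r
    · subst heq
      have hx : x = l := le_antisymm hxr hlx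
      subst hx
      have hml : m = x := mid_eq
      simp only [if_pos rfl, if_true]
      have hxm : x ≤ m := hml.ge
      by_cases hw : f.eval m < s.eval m
      · simp only [if_pos hw, LiChao.query, ← hm, if_pos hxm]
        have hw' : f.eval x ≤ s.eval x := by
          have := hw.le; simpa only [hml] using this
        exact ⟨min_le_left _ _,
          min_le_min (by exact_mod_cast hw') le_rfl⟩
      · simp only [if_neg hw, LiChao.query, ← hm, if_pos hxm]
        have hw' : s.eval x ≤ f.eval x := by
          have := not_lt.mp hw; simpa only [hml] using this
        exact ⟨le_trans (min_le_left _ _) (by exact_mod_cast hw'), le_rfl⟩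
    · have hltr : l < r := lt_of_le_of_ne hlr heq
      have hmr : m < r := mid_ub hltr
      simp only [if_neg heq]
      -- win/lose
      by_cases hw : f.eval m < s.eval m
      all_goals simp only [if_pos, if_neg, hw, if_true, if_false]
      case pos =>
        -- win = f, lose = s
        by_cases hside : s.eval l < f.eval l
        · simp only [if_pos hside]
          -- insert s into left
          by_cases hxm : x ≤ m
          · have := iha s l m x hlx hxm
            simp only [LiChao.query, ← hm, if_pos hxm]
            exact ⟨min_le_left _ _, le_min (le_trans (min_le_right _ _) this.1)
              (le_trans (min_le_right _ _) this.2)⟩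
          · -- x > m, win = f on node, right subtree unchanged
            simp only [LiChao.query, ← hm, if_neg hxm]
            refine ⟨min_le_left _ _, min_le_min ?_ le_rfl⟩
            -- f.eval x ≤ s.eval x for x ≥ m+1? here s lost at m but s better at l
            have : f.eval x ≤ s.eval x := by
              have : 0 ≤ (s.1 - f.1) * x + (s.2 - f.2) := by
                refine lin_extend (l := l) (m := m) (by omega) ?_ ?_ (by omega)
                · unfold Line.eval at *; nlinarith
                · unfold Line.eval at *; nlinarith
              unfold Line.eval at *; nlinarith
            exact_mod_cast this
        · simp only [if_neg hside]
          push_neg at hside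
          by_cases hxm : x ≤ m
          · simp only [LiChao.query, ← hm, if_pos hxm]
            refine ⟨min_le_left _ _, min_le_min ?_ le_rfl⟩
            have : f.eval x ≤ s.eval x := by
              have : 0 ≤ (s.1 - f.1) * x + (s.2 - f.2) := by
                apply lin_between (l := l) (m := m) _ _ hlx hxm
                · unfold Line.eval at *; nlinarith
                · unfold Line.eval at *; nlinarith
              unfold Line.eval at *; nlinarith
            exact_mod_cast this
          · push_neg at hxm
            have := ihb s (m+1) r x hxm hxr
            simp only [LiChao.query, ← hm, if_neg (not_le.mpr hxm)]
            refine ⟨min_le_left _ _, ?_⟩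
            exact le_min (le_trans (min_le_right _ _) this.1)
              (le_trans (min_le_right _ _) this.2)
      case neg =>
        push_neg at hw
        -- win = s, lose = f
        by_cases hside : f.eval l < s.eval l
        · simp only [if_pos hside]
          by_cases hxm : x ≤ m
          · have := iha f l m x hlx hxm
            simp only [LiChao.query, ← hm, if_pos hxm]
            exact ⟨le_trans (min_le_right _ _) this.1,
              min_le_min le_rfl this.2⟩
          · push_neg at hxm
            simp only [LiChao.query, ← hm, if_neg (not_le.mpr hxm)]
            refine ⟨?_, min_le_min le_rfl le_rfl⟩
            refine le_trans (min_le_left _ _) ?_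
            have : s.eval x ≤ f.eval x := by
              have : 0 ≤ (f.1 - s.1) * x + (f.2 - s.2) := by
                refine lin_extend (l := l) (m := m) (by omega) ?_ ?_ (by omega)
                · unfold Line.eval at *; nlinarith
                · unfold Line.eval at *; nlinarith
              unfold Line.eval at *; nlinarith
            exact_mod_cast this
        · simp only [if_neg hside]
          push_neg at hside
          by_cases hxm : x ≤ m
          · simp only [LiChao.query, ← hm, if_pos hxm]
            refine ⟨le_trans (min_le_left _ _) ?_, min_le_min le_rfl le_rfl⟩
            have : s.eval x ≤ f.eval x := by
              have : 0 ≤ (f.1 - s.1) * x + (f.2 - s.2) := by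
                apply lin_between (l := l) (m := m) _ _ hlx hxm
                · unfold Line.eval at *; nlinarith
                · unfold Line.eval at *; nlinarith
              unfold Line.eval at *; nlinarith
            exact_mod_cast this
          · push_neg at hxm
            have := ihb f (m+1) r x hxm hxr
            simp only [LiChao.query, ← hm, if_neg (not_le.mpr hxm)]
            exact ⟨le_trans (min_le_min le_rfl this.1) (min_le_right _ _),
              min_le_min le_rfl this.2⟩

end Aux


/-- The nontrivial direction of Theorem 3: the query result is at most the
value at `x` of every inserted line. -/
theorem lichao_query_le (L : List Line) (l r : ℤ) (hlr : l ≤ r)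
    (x : ℤ) (hlx : l ≤ x) (hxr : x ≤ r) (f : Line) (hf : f ∈ L) :
    (LiChao.insertAll L l r).query x l r ≤ (f.eval x : WithTop ℤ) := by
  have mono : ∀ (M : List Line) (t : LiChao),
      (M.foldl (fun t f => t.insert f l r) t).query x l r ≤ t.query x l r := by
    intro M
    induction M with
    | nil => intro t; exact le_rfl
    | cons g M ih =>
      intro t
      exact le_trans (ih _) (LiChao.insert_spec t g l r x hlx hxr).2
  have main : ∀ (M : List Line) (t : LiChao), f ∈ M →
      (M.foldl (fun t f => t.insert f l r) t).query x l r ≤ (f.eval x : WithTop ℤ) := by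
    intro M
    induction M with
    | nil => intro t h; cases h
    | cons g M ih =>
      intro t h
      rcases List.mem_cons.mp h with h | h
      · subst h
        exact le_trans (mono M _) (LiChao.insert_spec t f l r x hlx hxr).1
      · exact ih _ h
  exact main L .nil hf
end

section
/- For every nonempty list L of lines, every pair of integer bounds l ≤ r, and every integer x with l ≤ x ≤ r: there exists a line f ∈ L such that query (insertAll L l r) x l r = (eval f x : WithTop ℤ). -/
/-- Membership of a line in a tree. -/
def LiChao.MemT (f : Line) : LiChao → Prop
  | .nil => False
  | .node s a b => f = s ∨ LiChao.MemT f a ∨ LiChao.MemT f b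

lemma LiChao.mem_insert {f g : Line} {l r : ℤ} :
    ∀ t : LiChao, LiChao.MemT f (t.insert g l r) → f = g ∨ LiChao.MemT f t := by
  intro t
  induction t generalizing g l r with
  | nil =>
    simp [LiChao.insert, LiChao.MemT]
  | node s a b iha ihb =>
    intro h
    simp only [LiChao.insert, LiChao.MemT] at h ⊢
    split_ifs at h
    all_goals rcases h with h | h | h
    all_goals try tauto
    all_goals
      (first | have h' := iha h | have h' := ihb h) <;> rcases h' with h' | h' <;> tauto

lemma LiChao.insert_ne_nil (t : LiChao) (g : Line) (l r : ℤ) :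
    t.insert g l r ≠ .nil := by
  cases t
  · simp [LiChao.insert]
  · simp only [LiChao.insert]
    split_ifs <;> simp

lemma LiChao.query_achieved :
    ∀ (t : LiChao) (x l r : ℤ), t ≠ .nil →
      ∃ f, LiChao.MemT f t ∧ t.query x l r = (f.eval x : WithTop ℤ) := by
  intro t
  induction t with
  | nil => intro x l r h; exact absurd rfl h
  | node s a b iha ihb =>
    intro x l r _
    simp only [LiChao.query]
    split_ifs with hx
    · rcases eq_or_ne a LiChao.nil with rfl | ha
      · exact ⟨s, Or.inl rfl, by simp [LiChao.query]⟩
      · obtain ⟨f, hf, hq⟩ := iha x l ((l + r) / 2) ha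
        rw [hq]
        rcases le_total (s.eval x) (f.eval x) with h | h
        · exact ⟨s, Or.inl rfl, by simp [min_eq_left, WithTop.coe_le_coe, h]⟩
        · exact ⟨f, Or.inr (Or.inl hf), by simp [min_eq_right, WithTop.coe_le_coe, h]⟩
    · rcases eq_or_ne b LiChao.nil with rfl | hb
      · exact ⟨s, Or.inl rfl, by simp [LiChao.query]⟩
      · obtain ⟨f, hf, hq⟩ := ihb x ((l + r) / 2 + 1) r hb
        rw [hq]
        rcases le_total (s.eval x) (f.eval x) with h | h
        · exact ⟨s, Or.inl rfl, by simp [min_eq_left, WithTop.coe_le_coe, h]⟩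
        · exact ⟨f, Or.inr (Or.inr hf), by simp [min_eq_right, WithTop.coe_le_coe, h]⟩

lemma LiChao.foldl_ne_nil (L : List Line) (l r : ℤ) :
    ∀ t : LiChao, t ≠ .nil → L.foldl (fun t f => t.insert f l r) t ≠ .nil := by
  induction L with
  | nil => intro t h; exact h
  | cons g L ih =>
    intro t _
    exact ih _ (LiChao.insert_ne_nil t g l r)

lemma LiChao.mem_foldl (l r : ℤ) {f : Line} :
    ∀ (L : List Line) (t : LiChao),
      LiChao.MemT f (L.foldl (fun t f => t.insert f l r) t) → f ∈ L ∨ LiChao.MemT f t := by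
  intro L
  induction L with
  | nil => intro t h; exact Or.inr h
  | cons g L ih =>
    intro t h
    rcases ih _ h with h' | h'
    · exact Or.inl (List.mem_cons_of_mem _ h')
    · rcases LiChao.mem_insert t h' with rfl | h''
      · exact Or.inl List.mem_cons_self
      · exact Or.inr h''

/-- The easy direction of Theorem 3: the query result is achieved by some
inserted line. -/
theorem lichao_query_achieved (L : List Line) (hL : L ≠ []) (l r : ℤ) (hlr : l ≤ r)
    (x : ℤ) (hlx : l ≤ x) (hxr : x ≤ r) :
    ∃ f ∈ L, (LiChao.insertAll L l r).query x l r = (f.eval x : WithTop ℤ) := by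
  have hnil : LiChao.insertAll L l r ≠ .nil := by
    cases L with
    | nil => exact absurd rfl hL
    | cons g L =>
      exact LiChao.foldl_ne_nil L l r _ (LiChao.insert_ne_nil .nil g l r)
  obtain ⟨f, hf, hq⟩ := LiChao.query_achieved (LiChao.insertAll L l r) x l r hnil
  refine ⟨f, ?_, hq⟩
  rcases LiChao.mem_foldl l r L LiChao.nil hf with h | h
  · exact h
  · exact absurd h (by simp [LiChao.MemT])
end

section
/- For every Li-Chao tree t, every line f, and every pair of integer bounds l ≤ r: size (insert t f l r) ≤ size t + 1, where size counts the number of node constructors in the tree. -/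
/-- Each insertion creates at most one new node. -/
theorem lichao_insert_size (t : LiChao) (f : Line) (l r : ℤ) (hlr : l ≤ r) :
    (t.insert f l r).size ≤ t.size + 1 := by
  clear hlr
  induction t generalizing f l r with
  | nil => simp [LiChao.insert, LiChao.size]
  | node s a b iha ihb =>
    have h1 := iha s l ((l+r)/2)
    have h2 := iha f l ((l+r)/2)
    have h3 := ihb s ((l+r)/2+1) r
    have h4 := ihb f ((l+r)/2+1) r
    simp only [LiChao.insert, LiChao.size]
    split_ifs <;> simp [LiChao.size] <;> omega
end

section
/- For every list L of lines and every pair of integer bounds l ≤ r: size (insertAll L l r) ≤ L.length, where size counts the number of node constructors in the tree. In particular, after N insertions into an initially empty Li-Chao tree the tree has at most N nodes. -/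
lemma insert_size (t : LiChao) (f : Line) (l r : ℤ) :
    (t.insert f l r).size ≤ t.size + 1 := by
  induction t generalizing f l r with
  | nil => simp [LiChao.insert, LiChao.size]
  | node s a b iha ihb =>
    rw [LiChao.insert]
    repeat' split
    all_goals
      simp only [LiChao.size]
      have h1 := iha s l ((l+r)/2); have h2 := iha f l ((l+r)/2)
      have h3 := ihb s ((l+r)/2+1) r; have h4 := ihb f ((l+r)/2+1) r
      omega

lemma foldl_size (L : List Line) (t : LiChao) (l r : ℤ) :
    (L.foldl (fun t f => t.insert f l r) t).size ≤ t.size + L.length := by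
  induction L generalizing t with
  | nil => simp
  | cons f L ih =>
    simp only [List.foldl_cons, List.length_cons]
    calc _ ≤ (t.insert f l r).size + L.length := ih _
    _ ≤ t.size + (L.length + 1) := by have := insert_size t f l r; omega

/-- Proposition 6 (Space Complexity): after `N` insertions into an initially
empty Li-Chao tree, the tree has at most `N` nodes. -/
theorem lichao_size_le_length (L : List Line) (l r : ℤ) (hlr : l ≤ r) :
    (LiChao.insertAll L l r).size ≤ L.length := by
  have := foldl_size L .nil l r
  simpa [LiChao.insertAll, LiChao.size] using this
end

section
/- For every list L of lines and every pair of integer bounds l ≤ r: height (insertAll L l r) ≤ Nat.clog 2 (r − l + 1).toNat + 1, where height is the usual tree height (height nil = 0, height (node s a b) = 1 + max (height a) (height b)). In particular, a Li-Chao tree over an integer coordinate universe of size C = r − l + 1 has depth O(log C), so insertion and query each visit O(log C) nodes. -/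
/-- Structural invariant: the tree is shaped according to the bounds `[l, r]`. -/
inductive Good : ℤ → ℤ → LiChao → Prop where
  | nil {l r : ℤ} : Good l r .nil
  | leaf {l : ℤ} {s : Line} : Good l l (.node s .nil .nil)
  | node {l r : ℤ} {s : Line} {a b : LiChao} (h : l < r)
      (ha : Good l ((l + r) / 2) a) (hb : Good ((l + r) / 2 + 1) r b) :
      Good l r (.node s a b)

lemma good_insert (t : LiChao) (f : Line) (l r : ℤ) (hlr : l ≤ r)
    (h : Good l r t) : Good l r (t.insert f l r) := by
  induction t generalizing f l r with
  | nil =>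
      rcases eq_or_lt_of_le hlr with h1 | h1
      · subst h1; exact Good.leaf
      · exact Good.node h1 Good.nil Good.nil
  | node s a b iha ihb =>
      rcases h with _ | _ | ⟨h1, ha, hb⟩
      · -- leaf: l = r
        simp only [LiChao.insert]
        split_ifs <;> exact Good.leaf
      · -- node: l < r
        simp only [LiChao.insert]
        rw [if_neg (by omega : ¬ l = r)]
        have hm1 : l ≤ (l + r) / 2 := by omega
        have hm2 : (l + r) / 2 + 1 ≤ r := by omega
        split_ifs <;>
          first
            | exact Good.node h1 (iha _ _ _ hm1 ha) hb
            | exact Good.node h1 ha (ihb _ _ _ hm2 hb)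

lemma clog_child {c n : ℕ} (hn : 2 ≤ n) (hc : 2 * c ≤ n + 1) :
    Nat.clog 2 c + 1 ≤ Nat.clog 2 n := by
  have hK : 1 ≤ Nat.clog 2 n := Nat.clog_pos one_lt_two hn
  have hn' : n ≤ 2 ^ Nat.clog 2 n := Nat.le_pow_clog one_lt_two n
  have hsplit : 2 ^ Nat.clog 2 n = 2 * 2 ^ (Nat.clog 2 n - 1) := by
    conv_lhs => rw [show Nat.clog 2 n = (Nat.clog 2 n - 1) + 1 by omega]
    rw [pow_succ]; ring
  have hc2 : c ≤ 2 ^ (Nat.clog 2 n - 1) := by omega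
  have := (Nat.clog_le_iff_le_pow one_lt_two).mpr hc2
  omega

lemma good_height {l r : ℤ} {t : LiChao} (h : Good l r t) (hlr : l ≤ r) :
    t.height ≤ Nat.clog 2 (r - l + 1).toNat + 1 := by
  induction h with
  | nil => simp [LiChao.height]
  | leaf => simp [LiChao.height]
  | @node l r s a b h1 ha hb iha ihb =>
      have iha' := iha (by omega)
      have ihb' := ihb (by omega)
      have hL : Nat.clog 2 ((l + r) / 2 - l + 1).toNat + 1
          ≤ Nat.clog 2 (r - l + 1).toNat := by
        apply clog_child <;> omega
      have hR : Nat.clog 2 (r - ((l + r) / 2 + 1) + 1).toNat + 1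
          ≤ Nat.clog 2 (r - l + 1).toNat := by
        apply clog_child <;> omega
      simp only [LiChao.height]
      omega

/-- Proposition 5 (structural part): a Li-Chao tree over an integer universe
of size `C = r - l + 1` has height at most `⌈log₂ C⌉ + 1`. -/
theorem lichao_height_le (L : List Line) (l r : ℤ) (hlr : l ≤ r) :
    (LiChao.insertAll L l r).height ≤ Nat.clog 2 (r - l + 1).toNat + 1 := by
  have h : Good l r (LiChao.insertAll L l r) := by
    unfold LiChao.insertAll
    induction L using List.reverseRecOn with
    | nil => exact Good.nil
    | append_singleton xs x ih =>
        rw [List.foldl_append, List.foldl_cons, List.foldl_nil]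
        exact good_insert _ _ _ _ hlr ih
  exact good_height h hlr
end
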